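/- The constant K = ∫₀¹ (1/x²)·(1/√(1-x⁴) - 1) dx satisfies 0 < K < 1. -/

import Mathlib

open Real MeasureTheory

private lemma key_pointwise (x : ℝ) (hx : x ∈ Set.Ioo (0:ℝ) 1) :
    0 < (1/x^2) * (1 / Real.sqrt (1 - x^4) - 1) ∧
    (1/x^2) * (1 / Real.sqrt (1 - x^4) - 1) < x / Real.sqrt (1 - x^2) := by
  obtain ⟨hx0, hx1⟩ := hx
  have hx4 : x^4 < 1 := pow_lt_one₀ hx0.le hx1 (by norm_num)
  have hs0 : (0:ℝ) < 1 - x^4 := by linarith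
  have ht0 : (0:ℝ) < 1 - x^2 := by nlinarith
  set s := Real.sqrt (1 - x^4) with hs
  set t := Real.sqrt (1 - x^2) with ht
  have hspos : 0 < s := Real.sqrt_pos.mpr hs0
  have htpos : 0 < t := Real.sqrt_pos.mpr ht0
  have hssq : s^2 = 1 - x^4 := Real.sq_sqrt hs0.le
  have hts : t ≤ s := Real.sqrt_le_sqrt (by nlinarith)
  have heq : (1/x^2) * (1/s - 1) = x^2 / (s*(1+s)) := by
    have hxne : x ≠ 0 := ne_of_gt hx0
    have hsne : s ≠ 0 := ne_of_gt hspos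
    have h1s : (1:ℝ) + s ≠ 0 := by positivity
    field_simp
    nlinarith [hssq]
  rw [heq]
  constructor
  · positivity
  · rw [div_lt_div_iff₀ (by positivity) htpos]
    nlinarith [mul_pos hx0 htpos, mul_pos hspos hspos, mul_pos hx0 hspos]

private lemma g_integrable :
    IntegrableOn (fun x : ℝ => x / Real.sqrt (1 - x^2)) (Set.Ioo (0:ℝ) 1) := by
  have h1 : IntervalIntegrable (fun x : ℝ => x ^ (-(1/2) : ℝ)) volume 0 1 :=
    intervalIntegral.intervalIntegrable_rpow' (by norm_num)
  have h2 : IntervalIntegrable (fun x : ℝ => (1 - x) ^ (-(1/2) : ℝ)) volume 0 1 := by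
    have := (h1.comp_sub_left 1).symm
    simpa using this
  have h3 : IntegrableOn (fun x : ℝ => (1 - x) ^ (-(1/2) : ℝ)) (Set.Ioo (0:ℝ) 1) :=
    (intervalIntegrable_iff_integrableOn_Ioo_of_le zero_le_one).mp h2
  refine Integrable.mono' h3 ?_ ?_
  · exact (Measurable.div measurable_id
      (Real.continuous_sqrt.measurable.comp (by measurability))).aestronglyMeasurable
  · rw [ae_restrict_iff' measurableSet_Ioo]
    filter_upwards with x hx
    obtain ⟨hx0, hx1⟩ := hx
    have ht0 : (0:ℝ) < 1 - x^2 := by nlinarith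
    have h1x : (0:ℝ) < 1 - x := by linarith
    have hfac : Real.sqrt (1 - x^2) = Real.sqrt (1 - x) * Real.sqrt (1 + x) := by
      rw [← Real.sqrt_mul h1x.le]; ring_nf
    have h1p : (1:ℝ) ≤ Real.sqrt (1 + x) := by
      have := Real.sqrt_le_sqrt (show (1:ℝ) ≤ 1 + x by linarith)
      simpa using this
    have hrpow : (1 - x) ^ (-(1/2) : ℝ) = 1 / Real.sqrt (1 - x) := by
      rw [Real.rpow_neg h1x.le, Real.sqrt_eq_rpow]
      norm_num
    rw [Real.norm_eq_abs, abs_of_nonneg (by positivity), hrpow, hfac]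
    rw [div_le_div_iff₀ (by positivity) (Real.sqrt_pos.mpr h1x)]
    have hsx : 0 < Real.sqrt (1 - x) := Real.sqrt_pos.mpr h1x
    have hxs : x ≤ Real.sqrt (1 + x) := le_trans hx1.le h1p
    nlinarith [mul_le_mul_of_nonneg_right hxs hsx.le, Real.sqrt_nonneg (1+x)]

private lemma f_integrable :
    IntegrableOn (fun x : ℝ => (1/x^2) * (1 / Real.sqrt (1 - x^4) - 1)) (Set.Ioo (0:ℝ) 1) := by
  refine Integrable.mono' g_integrable ?_ ?_
  · exact ((measurable_const.div (measurable_id.pow_const 2)).mul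
      ((measurable_const.div (Real.continuous_sqrt.measurable.comp (by measurability))).sub
        measurable_const)).aestronglyMeasurable
  · rw [ae_restrict_iff' measurableSet_Ioo]
    filter_upwards with x hx
    obtain ⟨h1, h2⟩ := key_pointwise x hx
    rw [Real.norm_eq_abs, abs_of_nonneg h1.le]
    exact h2.le

private lemma g_integral : ∫ x in (0:ℝ)..1, x / Real.sqrt (1 - x^2) = 1 := by
  have hderiv : ∀ x ∈ Set.Ioo (0:ℝ) 1,
      HasDerivAt (fun y : ℝ => -Real.sqrt (1 - y^2)) (x / Real.sqrt (1 - x^2)) x := by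
    intro x hx
    obtain ⟨hx0, hx1⟩ := hx
    have ht0 : (0:ℝ) < 1 - x^2 := by nlinarith
    have h1 : HasDerivAt (fun y : ℝ => 1 - y^2) (-(2*x)) x := by
      simpa using ((hasDerivAt_pow 2 x).const_sub 1)
    have h2 := (Real.hasDerivAt_sqrt (ne_of_gt ht0)).comp x h1
    have h3 : HasDerivAt (fun y : ℝ => -Real.sqrt (1 - y^2))
        (-(1 / (2 * Real.sqrt (1 - x ^ 2)) * -(2 * x))) x := h2.neg
    convert h3 using 1
    have : Real.sqrt (1 - x^2) ≠ 0 := ne_of_gt (Real.sqrt_pos.mpr ht0)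
    field_simp
  have hcont : ContinuousOn (fun y : ℝ => -Real.sqrt (1 - y^2)) (Set.Icc 0 1) :=
    ((Real.continuous_sqrt.comp (by continuity)).neg).continuousOn
  have hint : IntervalIntegrable (fun x : ℝ => x / Real.sqrt (1 - x^2)) volume 0 1 :=
    (intervalIntegrable_iff_integrableOn_Ioo_of_le zero_le_one).mpr g_integrable
  have := intervalIntegral.integral_eq_sub_of_hasDerivAt_of_le zero_le_one hcont hderiv hint
  rw [this]
  norm_num

theorem K_pos_lt_one :
    0 < ∫ x in Set.Ioo (0:ℝ) 1, (1/x^2) * (1 / Real.sqrt (1 - x^4) - 1) ∧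
    (∫ x in Set.Ioo (0:ℝ) 1, (1/x^2) * (1 / Real.sqrt (1 - x^4) - 1)) < 1 := by
  have hfint : IntervalIntegrable
      (fun x : ℝ => (1/x^2) * (1 / Real.sqrt (1 - x^4) - 1)) volume 0 1 :=
    (intervalIntegrable_iff_integrableOn_Ioo_of_le zero_le_one).mpr f_integrable
  have hgint : IntervalIntegrable (fun x : ℝ => x / Real.sqrt (1 - x^2)) volume 0 1 :=
    (intervalIntegrable_iff_integrableOn_Ioo_of_le zero_le_one).mpr g_integrable
  have hset : (∫ x in Set.Ioo (0:ℝ) 1, (1/x^2) * (1 / Real.sqrt (1 - x^4) - 1))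
      = ∫ x in (0:ℝ)..1, (1/x^2) * (1 / Real.sqrt (1 - x^4) - 1) := by
    rw [intervalIntegral.integral_of_le zero_le_one, integral_Ioc_eq_integral_Ioo]
  rw [hset]
  constructor
  · exact intervalIntegral.intervalIntegral_pos_of_pos_on hfint
      (fun x hx => (key_pointwise x hx).1) one_pos
  · have hdiff : 0 < ∫ x in (0:ℝ)..1,
        (x / Real.sqrt (1 - x^2) - (1/x^2) * (1 / Real.sqrt (1 - x^4) - 1)) :=
      intervalIntegral.intervalIntegral_pos_of_pos_on (hgint.sub hfint)
        (fun x hx => sub_pos.mpr (key_pointwise x hx).2) one_pos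
    rw [intervalIntegral.integral_sub hgint hfint, g_integral] at hdiff
    linarith
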